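/- Let h > 0, let v = (r, c, d) ∈ ℝ³ with r ≠ 0, and let w ∈ ℝ³ be linearly independent from v. If the numerical wall W_w(v) is a vertical ray, i.e., W_w(v) = {(α, β₀) : α > 0} for some β₀ ∈ ℝ, then β₀ = c/(h·r). In particular, for fixed v with r ≠ 0 there is a unique vertical numerical wall, defined by the equation β = c/(h·r). -/
import Mathlib


namespace BridgelandNotes

/-- The central charge `Z_{α,β}(v)` for `v = (r, c, d)`, where `h` plays the role of
`H²`:  `Z_{α,β}(v) = (−d + β·c + ((α² − β²)/2)·h·r) + i·α·(c − β·h·r)`. -/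
noncomputable def centralCharge (h : ℝ) (v : ℝ × ℝ × ℝ) (α β : ℝ) : ℂ :=
  ⟨-v.2.2 + β * v.2.1 + ((α ^ 2 - β ^ 2) / 2) * h * v.1,
    α * (v.2.1 - β * h * v.1)⟩

/-- The numerical wall `W_w(v)` in the `(α, β)`-plane:
`{(α, β) : α > 0 and Re Z_{α,β}(v)·Im Z_{α,β}(w) = Re Z_{α,β}(w)·Im Z_{α,β}(v)}`. -/
noncomputable def numericalWall (h : ℝ) (v w : ℝ × ℝ × ℝ) : Set (ℝ × ℝ) :=
  {p : ℝ × ℝ | 0 < p.1 ∧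
    (centralCharge h v p.1 p.2).re * (centralCharge h w p.1 p.2).im =
      (centralCharge h w p.1 p.2).re * (centralCharge h v p.1 p.2).im}

/-- The discriminant `Δ̄(v) = c² − 2·h·r·d` for `v = (r, c, d)`. -/
def disc (h : ℝ) (v : ℝ × ℝ × ℝ) : ℝ := v.2.1 ^ 2 - 2 * h * v.1 * v.2.2

/-- If `r ≠ 0` and the numerical wall `W_w(v)` is a vertical ray `{(α, β₀) : α > 0}`,
then `β₀ = c/(h·r)`: there is a unique vertical numerical wall, given by the equation
`β = c/(h·r)`. -/
theorem vertical_wall_unique (h : ℝ) (hh : 0 < h)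
    (v w : ℝ × ℝ × ℝ) (hr : v.1 ≠ 0) (hvw : LinearIndependent ℝ ![v, w]) (β₀ : ℝ)
    (hW : numericalWall h v w = {p : ℝ × ℝ | 0 < p.1 ∧ p.2 = β₀}) :
    β₀ = v.2.1 / (h * v.1) := by
  obtain ⟨r, c, d⟩ := v
  obtain ⟨R, C, D⟩ := w
  simp only at hr ⊢
  have mem1 : ((1 : ℝ), β₀) ∈ numericalWall h (r, c, d) (R, C, D) := by
    rw [hW]; exact ⟨one_pos, rfl⟩
  have mem2 : ((2 : ℝ), β₀) ∈ numericalWall h (r, c, d) (R, C, D) := by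
    rw [hW]; exact ⟨two_pos, rfl⟩
  simp only [numericalWall, centralCharge, Set.mem_setOf_eq] at mem1 mem2
  have e1 := mem1.2
  have e2 := mem2.2
  -- coefficient of α³ vanishes: r*C = R*c
  have hA : r * C = R * c := by
    have h3 : 3 * h * (r * C - R * c) = 0 := by linear_combination e2 - 2 * e1
    have h3h : (3 : ℝ) * h ≠ 0 := by positivity
    have := mul_eq_zero.mp h3
    rcases this with h' | h'
    · exact absurd h' h3h
    · linarith
  -- the numerator cross term D*r - d*R is nonzero by linear independence
  have hD : D * r - d * R ≠ 0 := by
    intro h0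
    have hpair := (LinearIndependent.pair_iff.mp hvw) R (-r)
    have hzero : R • ((r, c, d) : ℝ × ℝ × ℝ) + (-r) • ((R, C, D) : ℝ × ℝ × ℝ) = 0 := by
      simp only [Prod.smul_mk, smul_eq_mul, Prod.mk_add_mk, Prod.mk_eq_zero]
      refine ⟨by ring, by linarith, by linarith⟩
    exact hr (by have := (hpair hzero).2; linarith)
  -- the α-coefficient gives (c - β₀ h r)(D r - d R) = 0
  have hB : (c - β₀ * h * r) * (D * r - d * R) = 0 := by
    linear_combination r * e1 + (d - (β₀ ^ 2 / 2) * h * r - r * h / 2) * hA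
  have hc : c - β₀ * h * r = 0 := by
    rcases mul_eq_zero.mp hB with h' | h'
    · exact h'
    · exact absurd h' hD
  have hhr : h * r ≠ 0 := mul_ne_zero (ne_of_gt hh) hr
  field_simp
  linarith

end BridgelandNotes
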